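/- Let C_n be the cycle graph on n ≥ 5 vertices and x any vertex. Then K_{C_n,x}(N) = 2 - 4/N for 0 < N ≤ 2, and K_{C_n,x}(N) = 0 for N > 2. -/

import Mathlib

open Finset Filter Topology ENNReal SimpleGraph

noncomputable instance (priority := low) finLocFin {V : Type*} [Finite V] (G : SimpleGraph V) :
    G.LocallyFinite := fun _ => Fintype.ofFinite _

/-- Non-normalized graph Laplacian. -/
noncomputable def lap {V : Type*} (G : SimpleGraph V) [G.LocallyFinite] (f : V → ℝ) (x : V) : ℝ :=
  ∑ y ∈ G.neighborFinset x, (f y - f x)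

/-- Bakry–Émery Γ operator. -/
noncomputable def gam {V : Type*} (G : SimpleGraph V) [G.LocallyFinite] (f g : V → ℝ) (x : V) : ℝ :=
  (lap G (fun v => f v * g v) x - f x * lap G g x - g x * lap G f x) / 2

/-- Bakry–Émery Γ₂ operator. -/
noncomputable def gam2 {V : Type*} (G : SimpleGraph V) [G.LocallyFinite] (f g : V → ℝ) (x : V) : ℝ :=
  (lap G (gam G f g) x - gam G f (lap G g) x - gam G (lap G f) g x) / 2

/-- The coefficient 1/N for N ∈ (0,∞], with 1/∞ = 0. -/
noncomputable def invN (N : ℝ≥0∞) : ℝ := (N⁻¹).toReal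

/-- The vertex `x` satisfies the curvature-dimension inequality CD(K,N). -/
def CD {V : Type*} (G : SimpleGraph V) [G.LocallyFinite] (K : ℝ) (N : ℝ≥0∞) (x : V) : Prop :=
  ∀ f : V → ℝ, gam2 G f f x ≥ invN N * (lap G f x) ^ 2 + K * gam G f f x

open Fin.NatCast Fin.CommRing

section Aux
variable {n : ℕ} [NeZero n]

lemma fin_cast_inj {a b : ℕ} (ha : a < n) (hb : b < n) (h : (a : Fin n) = b) : a = b := by
  have := congrArg Fin.val h
  rwa [Fin.val_natCast, Fin.val_natCast, Nat.mod_eq_of_lt ha, Nat.mod_eq_of_lt hb] at this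

lemma fin_val_cast {a : ℕ} (ha : a < n) : ((a : Fin n)).val = a := by
  rw [Fin.val_natCast]; exact Nat.mod_eq_of_lt ha

lemma fin_shift_down (x : Fin n) {a : ℕ} (ha : 1 ≤ a) :
    x + (a : Fin n) - 1 = x + ((a - 1 : ℕ) : Fin n) := by
  obtain ⟨b, rfl⟩ : ∃ b, a = b + 1 := ⟨a - 1, by omega⟩
  simp only [Nat.add_sub_cancel]
  push_cast
  ring

lemma fin_x_eq (x : Fin n) : x = x + ((n : ℕ) : Fin n) := by
  rw [Fin.natCast_self, add_zero]

lemma fin_m1 (hn : 5 ≤ n) (x : Fin n) : x - 1 = x + ((n - 1 : ℕ) : Fin n) := by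
  conv_lhs => rw [fin_x_eq x]
  exact fin_shift_down x (by omega)

lemma fin_m2 (hn : 5 ≤ n) (x : Fin n) : x - 1 - 1 = x + ((n - 2 : ℕ) : Fin n) := by
  rw [fin_m1 hn x, fin_shift_down x (by omega : 1 ≤ n - 1)]
  congr 1

lemma fin_p1 (x : Fin n) : x + 1 = x + ((1 : ℕ) : Fin n) := by push_cast; ring

lemma fin_p2 (x : Fin n) : x + 1 + 1 = x + ((2 : ℕ) : Fin n) := by push_cast; ring

lemma fin_add_ne (x : Fin n) {a b : ℕ} (ha : a < n) (hb : b < n) (hab : a ≠ b) :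
    x + (a : Fin n) ≠ x + (b : Fin n) := by
  intro h
  exact hab (fin_cast_inj ha hb (add_left_cancel h))

lemma fin_one_val (hn : 5 ≤ n) : (1 : Fin n).val = 1 := by
  rw [Fin.val_one']
  exact Nat.mod_eq_of_lt (by omega)

lemma fin_sub_self_add (x : Fin n) (c : ℕ) : (x + (c : Fin n)) - x = (c : Fin n) :=
  add_sub_cancel_left x _

lemma fin_self_sub_add (x : Fin n) {c : ℕ} (hc0 : 0 < c) (hcn : c < n) :
    x - (x + (c : Fin n)) = ((n - c : ℕ) : Fin n) := by
  have key : ((c : ℕ) : Fin n) + ((n - c : ℕ) : Fin n) = 0 := by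
    rw [← Nat.cast_add, (by omega : c + (n - c) = n), Fin.natCast_self]
  have hneg : -((c : ℕ) : Fin n) = ((n - c : ℕ) : Fin n) := neg_eq_of_add_eq_zero_right key
  rw [← hneg]
  ring

lemma cycle_nbr (hn : 5 ≤ n) (x : Fin n) [Fintype ((cycleGraph n).neighborSet x)] :
    (cycleGraph n).neighborFinset x = {x - 1, x + 1} := by
  have h1 := fin_one_val (n := n) hn
  have foo : ∀ u v : Fin n, (u - v).val = 1 ↔ u = v + 1 := by
    intro u v
    rw [← h1, Fin.val_eq_val, sub_eq_iff_eq_add']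
  ext y
  rw [mem_neighborFinset, cycleGraph_adj']
  simp only [Finset.mem_insert, Finset.mem_singleton]
  rw [foo x y, foo y x]
  have e1 : x = y + 1 ↔ y = x - 1 := by rw [eq_sub_iff_add_eq, eq_comm]
  rw [e1]
end Aux

section Ops
variable {n : ℕ} [NeZero n] [inst : (cycleGraph n).LocallyFinite]

lemma lap_eq (hn : 5 ≤ n) (f : Fin n → ℝ) (z : Fin n) :
    lap (cycleGraph n) f z = f (z - 1) + f (z + 1) - 2 * f z := by
  have hne : z - 1 ≠ z + 1 := by
    rw [fin_m1 hn z, fin_p1 z]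
    exact fin_add_ne z (by omega) (by omega) (by omega)
  rw [lap, cycle_nbr hn z, Finset.sum_pair hne]
  ring

lemma gam_eq (hn : 5 ≤ n) (f g : Fin n → ℝ) (z : Fin n) :
    gam (cycleGraph n) f g z =
      ((f (z - 1) - f z) * (g (z - 1) - g z) + (f (z + 1) - f z) * (g (z + 1) - g z)) / 2 := by
  rw [gam, lap_eq hn, lap_eq hn, lap_eq hn]
  ring

lemma gam2_eq (hn : 5 ≤ n) (f : Fin n → ℝ) (x : Fin n) :
    gam2 (cycleGraph n) f f x =
      (f (x - 1) + f (x + 1) - 2 * f x) ^ 2 / 2 +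
      (f (x - 1 - 1) + f x - 2 * f (x - 1)) ^ 2 / 4 +
      (f x + f (x + 1 + 1) - 2 * f (x + 1)) ^ 2 / 4 := by
  have e1 : x - 1 + 1 = x := sub_add_cancel x 1
  have e2 : x + 1 - 1 = x := add_sub_cancel_right x 1
  rw [gam2]
  simp only [gam_eq hn, lap_eq hn, e1, e2]
  ring
end Ops

theorem stmt_14 (n : ℕ) (hn : 5 ≤ n) (x : Fin n)
    (KF : ℝ≥0∞ → ℝ)
    (hKF : ∀ N : ℝ≥0∞, 0 < N →
      IsGreatest {K : ℝ | CD (SimpleGraph.cycleGraph n) K N x} (KF N)) :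
    (∀ N : ℝ≥0∞, 0 < N → N ≤ 2 → KF N = 2 - 4 * invN N) ∧
    (∀ N : ℝ≥0∞, 2 < N → KF N = 0) := by
  haveI : NeZero n := ⟨by omega⟩
  have half : ((2:ℝ≥0∞)⁻¹).toReal = 1/2 := by rw [ENNReal.toReal_inv]; norm_num
  have hm1 := fin_m1 hn x
  have hm2 := fin_m2 hn x
  have hp1 := fin_p1 (n := n) x
  have hp2 := fin_p2 (n := n) x
  -- value computations for a function expressed on x + (c : ℕ)
  have hvals : ∀ c : ℕ, 0 < c → c < n →
      ((x + (c : Fin n)) - x).val = c ∧ (x - (x + (c : Fin n))).val = n - c := by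
    intro c hc0 hcn
    rw [fin_sub_self_add, fin_self_sub_add x hc0 hcn, fin_val_cast hcn,
      fin_val_cast (by omega : n - c < n)]
    exact ⟨rfl, rfl⟩
  have hvx1 : (x - x).val = 0 := by rw [sub_self]; rfl
  constructor
  · -- case 0 < N ≤ 2
    intro N hN0 hN2
    have hs : 1/2 ≤ invN N := by
      rw [invN, ← half]
      exact ENNReal.toReal_mono (ENNReal.inv_ne_top.mpr hN0.ne') (ENNReal.inv_le_inv.mpr hN2)
    have hmem : CD (cycleGraph n) (2 - 4 * invN N) N x := by
      intro f
      rw [gam2_eq hn f x, gam_eq hn f f x, lap_eq hn f x]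
      nlinarith [sq_nonneg (f (x-1-1) + f x - 2 * f (x-1)),
        sq_nonneg (f x + f (x+1+1) - 2 * f (x+1)),
        mul_nonneg (by linarith : (0:ℝ) ≤ invN N - 1/2) (sq_nonneg (f (x-1) - f (x+1)))]
    -- witness for the upper bound
    set F : Fin n → ℝ := fun v => ((min (v - x).val (x - v).val : ℕ) : ℝ) with hF
    have hFx : F x = 0 := by simp [hF, hvx1]
    have hFc : ∀ c : ℕ, 0 < c → c < n → F (x + (c : Fin n)) = min c (n - c) := by
      intro c hc0 hcn
      simp only [hF]
      rw [(hvals c hc0 hcn).1, (hvals c hc0 hcn).2]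
    have hcd := (hKF N hN0).1 F
    rw [gam2_eq hn F x, gam_eq hn F F x, lap_eq hn F x, hm2, hm1, hp2, hp1] at hcd
    rw [hFx, hFc 1 (by omega) (by omega), hFc 2 (by omega) (by omega),
      hFc (n-1) (by omega) (by omega), hFc (n-2) (by omega) (by omega)] at hcd
    rw [(by omega : min 1 (n-1) = 1), (by omega : min 2 (n-2) = 2),
      (by omega : min (n-1) (n-(n-1)) = 1), (by omega : min (n-2) (n-(n-2)) = 2)] at hcd
    push_cast at hcd
    have hub : KF N ≤ 2 - 4 * invN N := by nlinarith [hcd]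
    exact le_antisymm hub ((hKF N hN0).2 hmem)
  · -- case 2 < N
    intro N hN2
    have hN0 : 0 < N := lt_trans (by norm_num) hN2
    have hs : invN N ≤ 1/2 := by
      rw [invN, ← half]
      exact ENNReal.toReal_mono (by norm_num) (ENNReal.inv_le_inv.mpr hN2.le)
    have hs0 : 0 ≤ invN N := ENNReal.toReal_nonneg
    have hmem : CD (cycleGraph n) 0 N x := by
      intro f
      rw [gam2_eq hn f x, gam_eq hn f f x, lap_eq hn f x]
      nlinarith [sq_nonneg (f (x-1-1) + f x - 2 * f (x-1)),
        sq_nonneg (f x + f (x+1+1) - 2 * f (x+1)),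
        mul_nonneg (by linarith : (0:ℝ) ≤ 1/2 - invN N)
          (sq_nonneg (f (x-1) + f (x+1) - 2 * f x))]
    -- witness: locally linear function
    set F : Fin n → ℝ := fun v =>
      if (x - v).val ≤ 2 then -(((x - v).val : ℕ) : ℝ) else (((v - x).val : ℕ) : ℝ) with hF
    have hFx : F x = 0 := by simp [hF, hvx1]
    have hFp : ∀ c : ℕ, 0 < c → c + 2 < n → F (x + (c : Fin n)) = c := by
      intro c hc0 hcn
      simp only [hF]
      rw [(hvals c hc0 (by omega)).2, (hvals c hc0 (by omega)).1, if_neg (by omega)]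
    have hFm : ∀ c : ℕ, n - 2 ≤ c → c < n → F (x + (c : Fin n)) = -((n - c : ℕ) : ℝ) := by
      intro c hc0 hcn
      simp only [hF]
      rw [(hvals c (by omega) hcn).2, if_pos (by omega)]
    have hcd := (hKF N hN0).1 F
    rw [gam2_eq hn F x, gam_eq hn F F x, lap_eq hn F x, hm2, hm1, hp2, hp1] at hcd
    rw [hFx, hFp 1 (by omega) (by omega), hFp 2 (by omega) (by omega),
      hFm (n-1) (by omega) (by omega), hFm (n-2) (by omega) (by omega)] at hcd
    rw [(by omega : n - (n-1) = 1), (by omega : n - (n-2) = 2)] at hcd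
    push_cast at hcd
    have hub : KF N ≤ 0 := by nlinarith [hcd]
    exact le_antisymm hub ((hKF N hN0).2 hmem)
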